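/- If A is the weighted adjacency matrix of a DAG on d nodes, then A is nilpotent: A^d = 0, and consequently trace(e^{A∘A}) = d if and only if the graph defined by the nonzero entries of A is acyclic (where ∘ denotes entrywise squaring/Hadamard product). -/

import Mathlib

open Matrix

section Aux

variable {d : ℕ}

-- powers of triangular-under-permutation matrices
lemma tri_pow_eq_zero (M : Matrix (Fin d) (Fin d) ℝ) (σ : Equiv.Perm (Fin d))
    (h : ∀ i j : Fin d, σ j ≤ σ i → M i j = 0) :
    ∀ (n : ℕ) (i j : Fin d), (σ j : ℕ) < n + (σ i : ℕ) → (M ^ n) i j = 0 := by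
  intro n
  induction n with
  | zero =>
    intro i j hij
    have : i ≠ j := by
      rintro rfl; simp at hij
    simp [Matrix.one_apply_ne this]
  | succ n ih =>
    intro i j hij
    rw [pow_succ', Matrix.mul_apply]
    apply Finset.sum_eq_zero
    intro k _
    by_cases hk : σ k ≤ σ i
    · rw [h i k hk, zero_mul]
    · push_neg at hk
      have hk' : (σ i : ℕ) < (σ k : ℕ) := hk
      have : (σ j : ℕ) < n + (σ k : ℕ) := by omega
      rw [ih k j this, mul_zero]

lemma pow_entry_nonneg (B : Matrix (Fin d) (Fin d) ℝ) (hB : ∀ i j, 0 ≤ B i j) :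
    ∀ (n : ℕ) (i j : Fin d), 0 ≤ (B ^ n) i j := by
  intro n
  induction n with
  | zero =>
    intro i j
    by_cases hij : i = j
    · subst hij; simp
    · simp [Matrix.one_apply_ne hij]
  | succ n ih =>
    intro i j
    rw [pow_succ, Matrix.mul_apply]
    exact Finset.sum_nonneg fun k _ => mul_nonneg (ih i k) (hB k j)

lemma trace_exp_eq (B : Matrix (Fin d) (Fin d) ℝ) :
    Matrix.trace (NormedSpace.exp B) = tsum (fun n : ℕ => (n.factorial : ℝ)⁻¹ * Matrix.trace (B ^ n)) ∧
      Summable (fun n : ℕ => ((n.factorial : ℝ)⁻¹ * Matrix.trace (B ^ n))) := by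
  letI : SeminormedRing (Matrix (Fin d) (Fin d) ℝ) := Matrix.linftyOpSemiNormedRing
  letI : NormedRing (Matrix (Fin d) (Fin d) ℝ) := Matrix.linftyOpNormedRing
  letI : NormedAlgebra ℝ (Matrix (Fin d) (Fin d) ℝ) := Matrix.linftyOpNormedAlgebra
  have hs : Summable fun n : ℕ => ((n.factorial : ℝ)⁻¹ • B ^ n) :=
    NormedSpace.expSeries_summable' B
  set T : Matrix (Fin d) (Fin d) ℝ →L[ℝ] ℝ :=
    LinearMap.toContinuousLinearMap (Matrix.traceLinearMap (Fin d) ℝ ℝ) with hT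
  have hTapp : ∀ M : Matrix (Fin d) (Fin d) ℝ, T M = Matrix.trace M := fun _ => rfl
  have key : ∀ n : ℕ, T ((n.factorial : ℝ)⁻¹ • B ^ n) = (n.factorial : ℝ)⁻¹ * Matrix.trace (B ^ n) := by
    intro n
    rw [_root_.map_smul, hTapp, smul_eq_mul]
  constructor
  · rw [NormedSpace.exp_eq_tsum ℝ, ← hTapp, T.map_tsum hs]
    exact tsum_congr key
  · have := hs.map T.toLinearMap.toAddMonoidHom T.continuous
    refine this.congr fun n => ?_
    simpa using key n

end Aux


lemma walk_pos (A : Matrix (Fin d) (Fin d) ℝ) {i j : Fin d}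
    (h : Relation.TransGen (fun a b => A a b ≠ 0) i j) :
    ∃ n : ℕ, 0 < ((Matrix.hadamard A A) ^ (n + 1)) i j := by
  have hBnn : ∀ a b, 0 ≤ Matrix.hadamard A A a b := fun a b => mul_self_nonneg _
  induction h with
  | single hb =>
    exact ⟨0, by simpa [Matrix.hadamard_apply] using mul_self_pos.mpr hb⟩
  | @tail b c hab hbc ih =>
    obtain ⟨n, hn⟩ := ih
    refine ⟨n + 1, ?_⟩
    rw [pow_succ, Matrix.mul_apply]
    refine Finset.sum_pos' (fun k _ => mul_nonneg (pow_entry_nonneg _ hBnn _ _ _) (hBnn _ _))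
      ⟨b, Finset.mem_univ b, mul_pos hn ?_⟩
    simpa [Matrix.hadamard_apply] using mul_self_pos.mpr hbc

lemma topo_sort (A : Matrix (Fin d) (Fin d) ℝ)
    (hirr : ∀ i : Fin d, ¬ Relation.TransGen (fun a b => A a b ≠ 0) i i) :
    ∃ σ : Equiv.Perm (Fin d), ∀ i j : Fin d, σ j ≤ σ i → A i j = 0 := by
  classical
  set r := Relation.TransGen (fun a b : Fin d => A a b ≠ 0) with hr
  let p : Fin d → Fin d → Prop := fun a b => r a b ∨ a = b
  haveI hpo : IsPartialOrder (Fin d) p :=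
    { refl := fun a => Or.inr rfl
      trans := by
        rintro a b c (h1 | rfl) (h2 | rfl)
        · exact Or.inl (h1.trans h2)
        · exact Or.inl h1
        · exact Or.inl h2
        · exact Or.inr rfl
      antisymm := by
        rintro a b (h1 | rfl) h2
        · rcases h2 with h2 | rfl
          · exact absurd (h1.trans h2) (hirr a)
          · rfl
        · rfl }
  obtain ⟨s, hs, hps⟩ := extend_partialOrder p
  haveI := hs
  haveI : DecidableRel s := Classical.decRel s
  set l := Finset.univ.sort s with hl
  have hnd : l.Nodup := Finset.sort_nodup _ s
  have hmem : ∀ x, x ∈ l := fun x => (Finset.mem_sort s).mpr (Finset.mem_univ x)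
  have hlen : l.length = d := by simp [hl, Finset.length_sort]
  set e := List.Nodup.getEquivOfForallMemList l hnd hmem with he
  refine ⟨e.symm.trans (finCongr hlen), ?_⟩
  intro i j hij
  by_contra hA
  have hrij : r i j := Relation.TransGen.single hA
  have hsij : s i j := hps _ _ (Or.inl hrij)
  have hne : i ≠ j := fun h => hirr i (h ▸ hrij)
  have hle : (e.symm j : ℕ) ≤ (e.symm i : ℕ) := hij
  rcases lt_or_eq_of_le hle with hlt | heq
  · have hsorted : List.Pairwise s l := Finset.pairwise_sort _ s
    have := hsorted.rel_get_of_lt (a := e.symm j) (b := e.symm i) hlt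
    have hgj : l.get (e.symm j) = j := e.apply_symm_apply j
    have hgi : l.get (e.symm i) = i := e.apply_symm_apply i
    rw [hgj, hgi] at this
    exact hne (antisymm hsij this)
  · exact hne (e.symm.injective (Fin.ext heq.symm))

/-- If A is the weighted adjacency matrix of a DAG on d nodes (some permutation makes
it strictly triangular) then A is nilpotent with A^d = 0; and the NOTEARS
characterization holds: trace(e^{A∘A}) = d iff the graph of nonzero entries of A is
acyclic (iff some permutation makes A strictly triangular). -/
theorem dag_nilpotent_and_notears {d : ℕ} (A : Matrix (Fin d) (Fin d) ℝ) :
    ((∃ σ : Equiv.Perm (Fin d), ∀ i j : Fin d, σ j ≤ σ i → A i j = 0) → A ^ d = 0) ∧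
    (Matrix.trace (NormedSpace.exp (Matrix.hadamard A A)) = (d : ℝ) ↔
      ∃ σ : Equiv.Perm (Fin d), ∀ i j : Fin d, σ j ≤ σ i → A i j = 0) := by
  classical
  set B := Matrix.hadamard A A with hB
  have hBnn : ∀ i j, 0 ≤ B i j := fun i j => mul_self_nonneg _
  obtain ⟨hexp, hsum⟩ := trace_exp_eq B
  have htr0 : Matrix.trace ((B : Matrix (Fin d) (Fin d) ℝ) ^ 0) = (d : ℝ) := by
    simp [Matrix.trace_one]
  have htrnn : ∀ n : ℕ, 0 ≤ (n.factorial : ℝ)⁻¹ * Matrix.trace (B ^ n) := by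
    intro n
    refine mul_nonneg (by positivity) ?_
    exact Finset.sum_nonneg fun i _ => pow_entry_nonneg B hBnn n i i
  constructor
  · rintro ⟨σ, hσ⟩
    ext i j
    have hj : (σ j : ℕ) < d := (σ j).isLt
    simpa using tri_pow_eq_zero A σ hσ d i j (by omega)
  constructor
  · intro h
    -- all higher traces vanish
    have hzero : ∀ n : ℕ, 1 ≤ n → Matrix.trace (B ^ n) = 0 := by
      intro n hn
      by_contra hne
      have hpos : 0 < (n.factorial : ℝ)⁻¹ * Matrix.trace (B ^ n) := by
        have h1 : 0 ≤ Matrix.trace (B ^ n) :=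
          Finset.sum_nonneg fun i _ => pow_entry_nonneg B hBnn n i i
        exact mul_pos (by positivity) (lt_of_le_of_ne h1 (Ne.symm hne))
      have hle : ∑ k ∈ ({0, n} : Finset ℕ), ((k.factorial : ℝ)⁻¹ * Matrix.trace (B ^ k)) ≤
          tsum (fun k : ℕ => (k.factorial : ℝ)⁻¹ * Matrix.trace (B ^ k)) :=
        hsum.sum_le_tsum _ (fun k _ => htrnn k)
      have hne0n : (0 : ℕ) ≠ n := by omega
      rw [Finset.sum_pair hne0n] at hle
      rw [hexp, h] at *
      simp only [Nat.factorial_zero, Nat.cast_one, inv_one, one_mul, htr0] at hle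
      linarith [hle, h, hexp]
    -- irreflexivity of the reachability relation
    have hirr : ∀ i : Fin d, ¬ Relation.TransGen (fun a b => A a b ≠ 0) i i := by
      intro i hi
      obtain ⟨n, hn⟩ := walk_pos A hi
      have := hzero (n + 1) (by omega)
      have hge : (B ^ (n + 1)) i i ≤ Matrix.trace (B ^ (n + 1)) := by
        rw [Matrix.trace]
        exact Finset.single_le_sum (f := fun k => (B ^ (n + 1)) k k)
          (fun k _ => pow_entry_nonneg B hBnn (n + 1) k k) (Finset.mem_univ i)
      rw [this] at hge
      exact absurd hn (by simpa [hB] using not_lt.mpr hge)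
    exact topo_sort A hirr
  · rintro ⟨σ, hσ⟩
    have hσB : ∀ i j : Fin d, σ j ≤ σ i → B i j = 0 := fun i j hij => by
      simp [hB, Matrix.hadamard_apply, hσ i j hij]
    have hzero : ∀ n : ℕ, n ≠ 0 → (n.factorial : ℝ)⁻¹ * Matrix.trace (B ^ n) = 0 := by
      intro n hn
      have : Matrix.trace (B ^ n) = 0 := by
        rw [Matrix.trace]
        refine Finset.sum_eq_zero fun i _ => ?_
        exact tri_pow_eq_zero B σ hσB n i i (by omega)
      rw [this, mul_zero]
    rw [hexp, tsum_eq_single 0 hzero]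
    simp [htr0]
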